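/- If J ⊆ I are ideals of a commutative Noetherian ring R and there exists a nonnegative integer r with I^(r+1) = J·I^r, then J and I have the same integral closure; in particular every element of I is integral over J. -/

import Mathlib

open IsLocalRing Polynomial

section Defs
variable (R : Type*) [CommRing R]

/-- `J` is a reduction of `I`: `J ⊆ I` and `I^(r+1) = J·I^r` for some `r ≥ 0`. -/
def IsReduction (I J : Ideal R) : Prop :=
  J ≤ I ∧ ∃ r : ℕ, I ^ (r + 1) = J * I ^ r

/-- The core of an ideal: the intersection of all its reductions. -/
noncomputable def coreIdeal (I : Ideal R) : Ideal R :=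
  sInf {J | IsReduction R I J}

/-- Minimal number of generators of an ideal. -/
noncomputable def mu (I : Ideal R) : ℕ :=
  sInf {n | ∃ s : Finset R, s.card = n ∧ Ideal.span (s : Set R) = I}

/-- Length of a module, as the Krull dimension of its submodule lattice. -/
noncomputable def modLength (M : Type*) [AddCommGroup M] [Module R M] : WithBot ℕ∞ :=
  Order.krullDim (Submodule R M)

/-- Analytic spread: Krull dimension of the special fiber ring of the Rees algebra. -/
noncomputable def analyticSpread [IsLocalRing R] (I : Ideal R) : WithBot ℕ∞ :=
  ringKrullDim ((reesAlgebra I) ⧸ (Ideal.map (algebraMap R (reesAlgebra I)) (maximalIdeal R)))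

/-- Height of an ideal: infimum of heights of primes containing it. -/
noncomputable def idealHeight (I : Ideal R) : ℕ∞ :=
  ⨅ p : {p : PrimeSpectrum R // I ≤ p.asIdeal}, Order.height p.1

/-- γ(I): least number of minimal reductions whose intersection is the core. -/
noncomputable def gammaI (I : Ideal R) : ℕ :=
  sInf {t | ∃ J : Fin t → Ideal R,
    (∀ i, Minimal (IsReduction R I) (J i)) ∧ coreIdeal R I = ⨅ i, J i}

/-- `I` satisfies the condition `G_s`. -/
def SatisfiesGs (I : Ideal R) (s : ℕ) : Prop :=
  ∀ p : PrimeSpectrum R, I ≤ p.asIdeal → Order.height p < (s : ℕ∞) →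
    (mu (Localization.AtPrime p.asIdeal)
      (I.map (algebraMap R (Localization.AtPrime p.asIdeal))) : ℕ∞) ≤ Order.height p

/-- `K` is a geometric `i`-residual intersection of `I`. -/
def IsGeomResidualIntersection (I K : Ideal R) (i : ℕ) : Prop :=
  K ≠ ⊤ ∧ idealHeight R I ≤ (i : ℕ∞) ∧
  ∃ J : Ideal R, J ≤ I ∧ (∃ g : Fin i → R, J = Ideal.span (Set.range g)) ∧
    K = Submodule.colon J I ∧ (i : ℕ∞) ≤ idealHeight R K ∧
    ((i : ℕ∞) + 1) ≤ idealHeight R (I ⊔ K)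

/-- depth of a local ring is at least `n`. -/
def HasDepthGE (A : Type*) [CommRing A] [IsLocalRing A] (n : ℕ) : Prop :=
  ∃ rs : List A, rs.length = n ∧ (∀ x ∈ rs, x ∈ maximalIdeal A) ∧
    RingTheory.Sequence.IsRegular A rs

/-- Serre's condition `S₂` for a ring. -/
def SerreS2 (A : Type*) [CommRing A] : Prop :=
  ∀ p : PrimeSpectrum A, ∀ n : ℕ, (n : ℕ∞) ≤ min 2 (Order.height p) →
    HasDepthGE (Localization.AtPrime p.asIdeal) n

/-- `I` is weakly `s`-residually `S₂`. -/
def WeaklyResiduallyS2 (I : Ideal R) (s : ℕ) : Prop :=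
  ∀ i : ℕ, i ≤ s → ∀ K : Ideal R, IsGeomResidualIntersection R I K i → SerreS2 (R ⧸ K)

/-- A local ring is Cohen–Macaulay: its depth is at least its dimension. -/
def IsCMLocalRing (A : Type*) [CommRing A] [IsLocalRing A] : Prop :=
  ∀ n : ℕ, (n : WithBot ℕ∞) ≤ ringKrullDim A → HasDepthGE A n

end Defs

/-- `x` is integral over the ideal `J`. -/
def IsIntegralOverIdeal {R : Type*} [CommRing R] (J : Ideal R) (x : R) : Prop :=
  ∃ n : ℕ, 0 < n ∧ ∃ b : ℕ → R, (∀ j ∈ Finset.Icc 1 n, b j ∈ J ^ j) ∧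
    x ^ n + ∑ j ∈ Finset.Icc 1 n, b j * x ^ (n - j) = 0

private lemma idealPowMono {R : Type*} [CommRing R] {I J : Ideal R} (h : I ≤ J) (k : ℕ) :
    I ^ k ≤ J ^ k := by
  induction k with
  | zero => simp
  | succ k ih => rw [pow_succ, pow_succ]; exact Ideal.mul_mono ih h

private lemma keyIntegral {R : Type*} [CommRing R] [IsNoetherianRing R] (I J : Ideal R)
    (r : ℕ) (h : I ^ (r + 1) = J * I ^ r) {x : R}
    (hx : IsIntegralOverIdeal I x) : IsIntegralOverIdeal J x := by
  classical
  obtain ⟨n, hn, b, hb, heq⟩ := hx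
  set K : Ideal R := I + Ideal.span {x} with hK
  have hxK : x ∈ K := by
    rw [hK, Submodule.add_eq_sup]
    exact Submodule.mem_sup_right (Ideal.mem_span_singleton_self x)
  have hIK : I ≤ K := by rw [hK, Submodule.add_eq_sup]; exact le_sup_left
  have hsxK : Ideal.span {x} ≤ K := by
    rw [hK, Submodule.add_eq_sup]; exact le_sup_right
  -- K^(m+1) ≤ I * K^m + span {x^(m+1)}
  have P : ∀ m : ℕ, K ^ (m + 1) ≤ I * K ^ m + Ideal.span {x ^ (m + 1)} := by
    intro m
    induction m with
    | zero => simpa [pow_one] using le_of_eq hK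
    | succ m ih =>
      have hsp : Ideal.span {x ^ (m + 1)} ≤ K ^ (m + 1) := by
        rw [← Ideal.span_singleton_pow]
        exact idealPowMono hsxK (m + 1)
      calc K ^ (m + 1 + 1) = K ^ (m + 1) * K := pow_succ K (m + 1)
        _ ≤ (I * K ^ m + Ideal.span {x ^ (m + 1)}) * K := Ideal.mul_mono ih le_rfl
        _ = I * K ^ (m + 1) + (Ideal.span {x ^ (m + 1)} * I
              + Ideal.span {x ^ (m + 1)} * Ideal.span {x}) := by
            rw [hK]; ring
        _ ≤ I * K ^ (m + 1) + (I * K ^ (m + 1) + Ideal.span {x ^ (m + 1 + 1)}) := by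
            refine add_le_add le_rfl (add_le_add ?_ ?_)
            · rw [mul_comm]; exact Ideal.mul_mono le_rfl hsp
            · rw [Ideal.span_singleton_mul_span_singleton, ← pow_succ]
        _ ≤ I * K ^ (m + 1) + Ideal.span {x ^ (m + 1 + 1)} := by
            rw [← add_assoc]
            exact add_le_add (by simp [Submodule.add_eq_sup]) le_rfl
  -- x^n ∈ I * K^(n-1)
  have hxn : Ideal.span {x ^ n} ≤ I * K ^ (n - 1) := by
    rw [Ideal.span_le, Set.singleton_subset_iff]
    have hxneq : x ^ n = -(∑ j ∈ Finset.Icc 1 n, b j * x ^ (n - j)) :=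
      eq_neg_of_add_eq_zero_left heq
    rw [hxneq]
    refine neg_mem (Submodule.sum_mem _ fun j hj => ?_)
    obtain ⟨hj1, hjn⟩ := Finset.mem_Icc.mp hj
    have h1 : b j * x ^ (n - j) ∈ I ^ j * K ^ (n - j) :=
      Ideal.mul_mem_mul (hb j hj) (Ideal.pow_mem_pow hxK _)
    have h2 : I ^ j * K ^ (n - j) ≤ I * K ^ (n - 1) := by
      have e1 : I ^ j = I * I ^ (j - 1) := by
        rw [← pow_succ']; congr 1; omega
      rw [e1, mul_assoc]
      refine Ideal.mul_mono le_rfl ?_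
      calc I ^ (j - 1) * K ^ (n - j) ≤ K ^ (j - 1) * K ^ (n - j) :=
            Ideal.mul_mono (idealPowMono hIK _) le_rfl
        _ = K ^ (n - 1) := by rw [← pow_add]; congr 1; omega
    exact h2 h1
  have hKn : K ^ n ≤ I * K ^ (n - 1) := by
    have := P (n - 1)
    rw [show n - 1 + 1 = n by omega] at this
    exact this.trans (by rw [Submodule.add_eq_sup]; exact sup_le le_rfl hxn)
  have hxK1 : Ideal.span {x} * K ^ (n - 1) ≤ I * K ^ (n - 1) := by
    calc Ideal.span {x} * K ^ (n - 1) ≤ K * K ^ (n - 1) := Ideal.mul_mono hsxK le_rfl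
      _ = K ^ n := by rw [← pow_succ']; congr 1; omega
      _ ≤ I * K ^ (n - 1) := hKn
  set N : Ideal R := I ^ r * K ^ (n - 1) with hN
  have hpow : ∀ s : ℕ, Ideal.span {x} ^ s * K ^ (n - 1) ≤ I ^ s * K ^ (n - 1) := by
    intro s
    induction s with
    | zero => simp
    | succ s ih =>
      calc Ideal.span {x} ^ (s + 1) * K ^ (n - 1)
          = Ideal.span {x} ^ s * (Ideal.span {x} * K ^ (n - 1)) := by ring
        _ ≤ Ideal.span {x} ^ s * (I * K ^ (n - 1)) := Ideal.mul_mono le_rfl hxK1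
        _ = I * (Ideal.span {x} ^ s * K ^ (n - 1)) := by ring
        _ ≤ I * (I ^ s * K ^ (n - 1)) := Ideal.mul_mono le_rfl ih
        _ = I ^ (s + 1) * K ^ (n - 1) := by ring
  have hxNle : Ideal.span {x} * N ≤ J * N := by
    calc Ideal.span {x} * N = I ^ r * (Ideal.span {x} * K ^ (n - 1)) := by rw [hN]; ring
      _ ≤ I ^ r * (I * K ^ (n - 1)) := Ideal.mul_mono le_rfl hxK1
      _ = I ^ (r + 1) * K ^ (n - 1) := by ring
      _ = J * N := by rw [h, hN]; ring
  have hm0 : x ^ (r + (n - 1)) ∈ N := by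
    refine hpow r ?_
    rw [pow_add]
    exact Ideal.mul_mem_mul (Ideal.pow_mem_pow (Ideal.mem_span_singleton_self x) r)
      (Ideal.pow_mem_pow hxK _)
  haveI : Module.Finite R ↥N := Module.Finite.iff_fg.mpr (IsNoetherian.noetherian N)
  set f : Module.End R ↥N := algebraMap R (Module.End R ↥N) x with hf
  have hfr : LinearMap.range f ≤ J • (⊤ : Submodule R ↥N) := by
    rintro _ ⟨m, rfl⟩
    rw [hf, Module.algebraMap_end_apply, Submodule.mem_smul_top_iff, Ideal.smul_eq_mul]
    have : ((x • m : ↥N) : R) = x * (m : R) := rfl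
    rw [this]
    exact hxNle (Ideal.mul_mem_mul (Ideal.mem_span_singleton_self x) m.2)
  obtain ⟨p, hmonic, -, hcoeff, haeval⟩ :=
    LinearMap.exists_monic_and_coeff_mem_pow_and_aeval_eq_zero_of_range_le_smul R f J hfr
  set d := p.natDegree with hd
  set e := r + (n - 1) with he
  have hev : p.eval x * x ^ e = 0 := by
    have h1 : aeval f p = algebraMap R (Module.End R ↥N) (p.eval x) := by
      rw [hf, aeval_algebraMap_apply]
      congr 1
    have h2 : (aeval f p) (⟨x ^ e, hm0⟩ : ↥N) = 0 := by rw [haeval]; simp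
    rw [h1, Module.algebraMap_end_apply] at h2
    have h3 := congrArg Subtype.val h2
    simpa [smul_eq_mul] using h3
  refine ⟨d + e + 1, by omega, fun j => if j ≤ d then p.coeff (d - j) else 0, ?_, ?_⟩
  · intro j hj
    by_cases hjd : j ≤ d
    · simp only [if_pos hjd]
      have := hcoeff (d - j)
      rwa [show d - (d - j) = j by omega] at this
    · simp only [if_neg hjd]
      exact zero_mem _
  · have hev1 : p.eval x * x ^ (e + 1) = 0 := by
      rw [pow_succ, ← mul_assoc, hev, zero_mul]
    rw [eval_eq_sum_range, Finset.sum_mul, Finset.sum_range_succ] at hev1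
    rw [← hd] at hev1
    have hlead : p.coeff d = 1 := hmonic.coeff_natDegree
    rw [hlead, one_mul, ← pow_add] at hev1
    have hsum : ∑ j ∈ Finset.Icc 1 (d + e + 1),
        (if j ≤ d then p.coeff (d - j) else 0) * x ^ (d + e + 1 - j)
        = ∑ i ∈ Finset.range d, p.coeff i * x ^ i * x ^ (e + 1) := by
      rw [← Finset.sum_subset (Finset.Icc_subset_Icc_right (by omega) :
          Finset.Icc 1 d ⊆ Finset.Icc 1 (d + e + 1))]
      · refine Finset.sum_nbij' (fun j => d - j) (fun i => d - i) ?_ ?_ ?_ ?_ ?_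
        · intro j hj
          obtain ⟨h1, h2⟩ := Finset.mem_Icc.mp hj
          show d - j ∈ Finset.range d
          exact Finset.mem_range.mpr (by omega)
        · intro i hi
          have := Finset.mem_range.mp hi
          show d - i ∈ Finset.Icc 1 d
          exact Finset.mem_Icc.mpr (by omega)
        · intro j hj
          obtain ⟨h1, h2⟩ := Finset.mem_Icc.mp hj
          show d - (d - j) = j
          omega
        · intro i hi
          have := Finset.mem_range.mp hi
          show d - (d - i) = i
          omega
        · intro j hj
          obtain ⟨h1, h2⟩ := Finset.mem_Icc.mp hj
          show (if j ≤ d then p.coeff (d - j) else 0) * x ^ (d + e + 1 - j)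
              = p.coeff (d - j) * x ^ (d - j) * x ^ (e + 1)
          rw [if_pos h2, mul_assoc, ← pow_add]
          congr 2
          omega
      · intro j hj hj'
        obtain ⟨h1, h2⟩ := Finset.mem_Icc.mp hj
        have : ¬ j ≤ d := fun hc => hj' (Finset.mem_Icc.mpr ⟨h1, hc⟩)
        rw [if_neg this, zero_mul]
    beta_reduce
    rw [hsum]
    rw [add_comm, show d + (e + 1) = d + e + 1 by omega] at hev1
    exact hev1

/-- If `J ⊆ I` and `I^(r+1) = J·I^r` then `J` and `I` have the same integral closure;
in particular every element of `I` is integral over `J`. -/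
theorem stmt0 {R : Type*} [CommRing R] [IsNoetherianRing R] (I J : Ideal R)
    (hJI : J ≤ I) (r : ℕ) (h : I ^ (r + 1) = J * I ^ r) :
    {x | IsIntegralOverIdeal J x} = {x | IsIntegralOverIdeal I x} ∧
      ∀ x ∈ I, IsIntegralOverIdeal J x := by
  have key : ∀ x : R, IsIntegralOverIdeal I x → IsIntegralOverIdeal J x :=
    fun x => keyIntegral I J r h
  have mono : ∀ x : R, IsIntegralOverIdeal J x → IsIntegralOverIdeal I x := by
    rintro x ⟨n, hn, b, hb, he⟩
    exact ⟨n, hn, b, fun j hj => idealPowMono hJI j (hb j hj), he⟩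
  have self : ∀ x ∈ I, IsIntegralOverIdeal I x := by
    intro x hx
    refine ⟨1, one_pos, fun _ => -x, ?_, ?_⟩
    · intro j hj
      rw [Finset.Icc_self, Finset.mem_singleton] at hj
      subst hj
      simpa using neg_mem hx
    · simp
  exact ⟨Set.ext fun x => ⟨mono x, key x⟩, fun x hx => key x (self x hx)⟩
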